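/- For every integer n with 0 ≤ n ≤ l−1, the quotient A-module (x^n·B)/Δ(I^n) is, as an abelian group, free of rank (l−n)(l−n−1)/2. In particular, the cokernel of Δ : A → B is a free abelian group of rank l(l−1)/2. -/

import Mathlib

open MvPolynomial

set_option maxHeartbeats 800000
set_option synthInstance.maxHeartbeats 200000
set_option linter.unusedSectionVars false

noncomputable section

/-- `A = ℤ[x,y]/(x^l − y^l)`, with `x = X 0`, `y = X 1`. -/
def IA (l : ℕ) : Ideal (MvPolynomial (Fin 2) ℤ) := Ideal.span {X 0 ^ l - X 1 ^ l}

/-- `B = ℤ[x,t]/(t^l − 1)`, with `x = X 0`, `t = X 1`. -/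
def IB (l : ℕ) : Ideal (MvPolynomial (Fin 2) ℤ) := Ideal.span {X 1 ^ l - 1}

abbrev Aq (l : ℕ) := MvPolynomial (Fin 2) ℤ ⧸ IA l
abbrev Bq (l : ℕ) := MvPolynomial (Fin 2) ℤ ⧸ IB l

/-- The class of `x` in `A`. -/
def xA (l : ℕ) : Aq l := Ideal.Quotient.mk (IA l) (X 0)
/-- The class of `y` in `A`. -/
def yA (l : ℕ) : Aq l := Ideal.Quotient.mk (IA l) (X 1)
/-- The class of `x` in `B`. -/
def xB (l : ℕ) : Bq l := Ideal.Quotient.mk (IB l) (X 0)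
/-- The class of `t` in `B`. -/
def tB (l : ℕ) : Bq l := Ideal.Quotient.mk (IB l) (X 1)

lemma tB_pow (l : ℕ) : tB l ^ l = 1 := by
  have h : (X 1 ^ l - 1 : MvPolynomial (Fin 2) ℤ) ∈ IB l := Ideal.subset_span rfl
  have h2 : Ideal.Quotient.mk (IB l) (X 1 ^ l - 1) = 0 :=
    Ideal.Quotient.eq_zero_iff_mem.mpr h
  have h3 : tB l ^ l - 1 = 0 := by
    rw [tB, ← map_pow, ← map_one (Ideal.Quotient.mk (IB l)), ← map_sub]
    simpa using h2
  exact sub_eq_zero.mp h3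

/-- The diagonal ring homomorphism `Δ : A → B`, determined by `x ↦ x`, `y ↦ t·x`. -/
def Δmap (l : ℕ) : Aq l →+* Bq l :=
  Ideal.Quotient.lift (IA l) ((aeval ![xB l, tB l * xB l]).toRingHom)
    (by
      intro p hp
      obtain ⟨c, rfl⟩ := Ideal.mem_span_singleton'.mp hp
      have key : (aeval ![xB l, tB l * xB l]) (X 0 ^ l - X 1 ^ l : MvPolynomial (Fin 2) ℤ) = 0 := by
        simp [mul_pow, tB_pow l]
      simp only [AlgHom.toRingHom_eq_coe, RingHom.coe_coe, map_mul, key, mul_zero])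

lemma Δmap_xA (l : ℕ) : Δmap l (xA l) = xB l := by
  simp [Δmap, xA]

lemma Δmap_yA (l : ℕ) : Δmap l (yA l) = tB l * xB l := by
  simp [Δmap, yA]

/-- The ideal `I = (x, y) ⊆ A`. -/
def Iid (l : ℕ) : Ideal (Aq l) := Ideal.span {xA l, yA l}

/-- The subgroup `x^n·B = {x^n·b : b ∈ B}` of `B`, as an additive subgroup. -/
def xnBadd (l n : ℕ) : AddSubgroup (Bq l) := (AddMonoidHom.mulLeft (xB l ^ n)).range

/-- The image `Δ(I^n) ⊆ B`, as an additive subgroup. -/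
def ΔInadd (l n : ℕ) : AddSubgroup (Bq l) :=
  AddSubgroup.map (Δmap l).toAddMonoidHom (Iid l ^ n : Ideal (Aq l)).toAddSubgroup

/-! ### Auxiliary development -/

abbrev Rng (l : ℕ) := AddMonoidAlgebra ℤ (ℕ × ZMod l)

section maps
variable (l : ℕ) [NeZero l]

lemma smul_one_zmod (n : ℕ) : n • (1 : ZMod l) = (n : ZMod l) := by
  rw [nsmul_eq_mul, mul_one]

/-- `Φ : B → ℤ[ℕ × ZMod l]`, `x ↦ single (1,0)`, `t ↦ single (0,1)`. -/
def Φhom : Bq l →+* Rng l :=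
  Ideal.Quotient.lift (IB l)
    ((aeval ![AddMonoidAlgebra.single ((1 : ℕ), (0 : ZMod l)) (1 : ℤ),
      AddMonoidAlgebra.single ((0 : ℕ), (1 : ZMod l)) (1 : ℤ)]).toRingHom)
    (by
      intro p hp
      obtain ⟨c, rfl⟩ := Ideal.mem_span_singleton'.mp hp
      have key : (aeval ![AddMonoidAlgebra.single ((1 : ℕ), (0 : ZMod l)) (1 : ℤ),
          AddMonoidAlgebra.single ((0 : ℕ), (1 : ZMod l)) (1 : ℤ)])
          (X 1 ^ l - 1 : MvPolynomial (Fin 2) ℤ) = 0 := by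
        rw [map_sub, map_pow, map_one, aeval_X]
        simp only [Matrix.cons_val_one, Matrix.head_cons, Matrix.cons_val_zero]
        rw [AddMonoidAlgebra.single_pow, one_pow, Prod.smul_mk, smul_one_zmod,
          ZMod.natCast_self, smul_zero, AddMonoidAlgebra.one_def, Prod.mk_zero_zero, sub_self]
      simp only [AlgHom.toRingHom_eq_coe, RingHom.coe_coe, map_mul, key, mul_zero])

lemma Φhom_mk (p : MvPolynomial (Fin 2) ℤ) :
    Φhom l (Ideal.Quotient.mk (IB l) p) =
      aeval ![AddMonoidAlgebra.single ((1 : ℕ), (0 : ZMod l)) (1 : ℤ),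
        AddMonoidAlgebra.single ((0 : ℕ), (1 : ZMod l)) (1 : ℤ)] p := by
  simp [Φhom]

lemma Φhom_xB : Φhom l (xB l) = AddMonoidAlgebra.single ((1 : ℕ), (0 : ZMod l)) (1 : ℤ) := by
  rw [xB, Φhom_mk, aeval_X]; rfl

lemma Φhom_tB : Φhom l (tB l) = AddMonoidAlgebra.single ((0 : ℕ), (1 : ZMod l)) (1 : ℤ) := by
  rw [tB, Φhom_mk, aeval_X]; rfl

lemma tB_pow_mod (m : ℕ) : tB l ^ m = tB l ^ (m % l) := by
  conv_lhs => rw [← Nat.div_add_mod m l]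
  rw [pow_add, pow_mul, tB_pow, one_pow, one_mul]

/-- the monoid hom for `Ψ`. -/
def Ψmul : Multiplicative (ℕ × ZMod l) →* Bq l where
  toFun p := xB l ^ (Multiplicative.toAdd p).1 * tB l ^ (Multiplicative.toAdd p).2.val
  map_one' := by
    show xB l ^ (0 : ℕ × ZMod l).1 * tB l ^ (0 : ℕ × ZMod l).2.val = 1
    simp [ZMod.val_zero]
  map_mul' a b := by
    show xB l ^ ((Multiplicative.toAdd a) + (Multiplicative.toAdd b)).1 *
        tB l ^ ((Multiplicative.toAdd a) + (Multiplicative.toAdd b)).2.val = _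
    rw [Prod.fst_add, Prod.snd_add, ZMod.val_add, ← tB_pow_mod, pow_add, pow_add]
    ring

def Ψhom : Rng l →+* Bq l :=
  ((AddMonoidAlgebra.lift ℤ (Bq l) (ℕ × ZMod l)) (Ψmul l)).toRingHom

lemma Ψhom_single (a : ℕ × ZMod l) (c : ℤ) :
    Ψhom l (AddMonoidAlgebra.single a c) = c • (xB l ^ a.1 * tB l ^ a.2.val) := by
  simp only [Ψhom, AlgHom.toRingHom_eq_coe, RingHom.coe_coe, AddMonoidAlgebra.lift_single]
  rfl

lemma Φhom_Ψhom (f : Rng l) : Φhom l (Ψhom l f) = f := by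
  have : (Φhom l).comp (Ψhom l) = RingHom.id (Rng l) := by
    apply AddMonoidAlgebra.ringHom_ext
    · intro b
      have h1 : (AddMonoidAlgebra.single (0 : ℕ × ZMod l) b : Rng l) = b • 1 := by
        rw [AddMonoidAlgebra.one_def, AddMonoidAlgebra.smul_single', mul_one]
      rw [h1]
      simp only [RingHom.coe_comp, Function.comp_apply, RingHom.id_apply]
      rw [map_zsmul, map_zsmul, map_one, map_one]
    · intro a
      simp only [RingHom.coe_comp, Function.comp_apply, RingHom.id_apply]
      rw [Ψhom_single, one_smul, map_mul, map_pow, map_pow, Φhom_xB, Φhom_tB,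
        AddMonoidAlgebra.single_pow, AddMonoidAlgebra.single_pow, one_pow, one_pow,
        AddMonoidAlgebra.single_mul_single, one_mul]
      congr 1
      rw [Prod.smul_mk, Prod.smul_mk, Prod.mk_add_mk, smul_zero, smul_zero,
        smul_one_zmod, smul_eq_mul, mul_one, add_zero, zero_add, ZMod.natCast_val,
        ZMod.cast_id]
  exact DFunLike.congr_fun this f

lemma Ψhom_Φhom (b : Bq l) : Ψhom l (Φhom l b) = b := by
  have : (Ψhom l).comp (Φhom l) = RingHom.id (Bq l) := by
    apply Ideal.Quotient.ringHom_ext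
    apply MvPolynomial.ringHom_ext
    · intro r
      rw [eq_intCast (MvPolynomial.C : ℤ →+* MvPolynomial (Fin 2) ℤ) r]
      simp only [RingHom.coe_comp, Function.comp_apply, map_intCast]
    · intro i
      simp only [RingHom.coe_comp, Function.comp_apply, RingHom.id_apply]
      match i with
      | 0 =>
        show Ψhom l (Φhom l (xB l)) = xB l
        rw [Φhom_xB, Ψhom_single, one_smul, ZMod.val_zero, pow_zero, pow_one, mul_one]
      | 1 =>
        show Ψhom l (Φhom l (tB l)) = tB l
        rw [Φhom_tB, Ψhom_single, one_smul, pow_zero, one_mul]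
        have : (1 : ZMod l) = ((1 : ℕ) : ZMod l) := by norm_cast
        rw [this, ZMod.val_natCast, ← tB_pow_mod, pow_one]
  exact DFunLike.congr_fun this b

end maps
section charac
variable (l : ℕ) [NeZero l]

/-- image of Δ composed with Φ, on polynomials. -/
lemma Φ_Δ_mk (q : MvPolynomial (Fin 2) ℤ) :
    Φhom l (Δmap l (Ideal.Quotient.mk (IA l) q)) =
      aeval ![AddMonoidAlgebra.single ((1 : ℕ), (0 : ZMod l)) (1 : ℤ),
        AddMonoidAlgebra.single ((1 : ℕ), (1 : ZMod l)) (1 : ℤ)] q := by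
  have : (Φhom l).comp ((Δmap l).comp (Ideal.Quotient.mk (IA l))) =
      (aeval ![AddMonoidAlgebra.single ((1 : ℕ), (0 : ZMod l)) (1 : ℤ),
        AddMonoidAlgebra.single ((1 : ℕ), (1 : ZMod l)) (1 : ℤ)]).toRingHom := by
    apply MvPolynomial.ringHom_ext
    · intro r
      rw [eq_intCast (MvPolynomial.C : ℤ →+* MvPolynomial (Fin 2) ℤ) r]
      simp only [RingHom.coe_comp, Function.comp_apply, map_intCast,
        AlgHom.toRingHom_eq_coe, RingHom.coe_coe]
    · intro i
      simp only [RingHom.coe_comp, Function.comp_apply, AlgHom.toRingHom_eq_coe,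
        RingHom.coe_coe, aeval_X]
      match i with
      | 0 =>
        show Φhom l (Δmap l (xA l)) = _
        rw [Δmap_xA, Φhom_xB]; rfl
      | 1 =>
        show Φhom l (Δmap l (yA l)) = _
        rw [Δmap_yA, map_mul, Φhom_xB, Φhom_tB, AddMonoidAlgebra.single_mul_single,
          one_mul, Prod.mk_add_mk, zero_add, add_zero]
        rfl
  exact DFunLike.congr_fun this q

lemma F_monomial (d : Fin 2 →₀ ℕ) (c : ℤ) :
    aeval ![AddMonoidAlgebra.single ((1 : ℕ), (0 : ZMod l)) (1 : ℤ),
        AddMonoidAlgebra.single ((1 : ℕ), (1 : ZMod l)) (1 : ℤ)] (monomial d c) =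
      AddMonoidAlgebra.single (d 0 + d 1, (d 1 : ZMod l)) c := by
  rw [aeval_monomial, Finsupp.prod_pow, Fin.prod_univ_two]
  simp only [Matrix.cons_val_zero, Matrix.cons_val_one, Matrix.head_cons]
  rw [AddMonoidAlgebra.single_pow, AddMonoidAlgebra.single_pow, one_pow, one_pow,
    AddMonoidAlgebra.single_mul_single, one_mul]
  rw [eq_intCast (algebraMap ℤ (Rng l))]
  have h1 : ((c : ℤ) : Rng l) = c • (1 : Rng l) := by
    rw [zsmul_eq_mul, mul_one]
  rw [h1, AddMonoidAlgebra.one_def, smul_mul_assoc, AddMonoidAlgebra.single_mul_single,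
    one_mul, AddMonoidAlgebra.smul_single', mul_one, zero_add]
  congr 1
  simp [Prod.smul_mk, smul_one_zmod, Prod.ext_iff, Prod.fst_natCast, Prod.snd_natCast]

lemma supp_F (q : MvPolynomial (Fin 2) ℤ) :
    ∀ p ∈ (aeval ![AddMonoidAlgebra.single ((1 : ℕ), (0 : ZMod l)) (1 : ℤ),
        AddMonoidAlgebra.single ((1 : ℕ), (1 : ZMod l)) (1 : ℤ)] q).coeff.support,
      ∃ d ∈ q.support, p = (d 0 + d 1, (d 1 : ZMod l)) := by
  intro p hp
  conv at hp => rw [MvPolynomial.as_sum q]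
  rw [map_sum, AddMonoidAlgebra.coeff_sum] at hp
  have h2 := Finsupp.support_finset_sum (s := q.support)
    (f := fun d => (aeval ![AddMonoidAlgebra.single ((1 : ℕ), (0 : ZMod l)) (1 : ℤ),
        AddMonoidAlgebra.single ((1 : ℕ), (1 : ZMod l)) (1 : ℤ)] (monomial d (coeff d q))).coeff) hp
  rw [Finset.mem_biUnion] at h2
  obtain ⟨d, hd, hp2⟩ := h2
  simp only [F_monomial, AddMonoidAlgebra.coeff_single] at hp2
  have := Finsupp.support_single_subset hp2
  rw [Finset.mem_singleton] at this
  exact ⟨d, hd, this⟩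

/-- the ideal of polynomials all of whose monomials have total degree ≥ n -/
def Jlow (n : ℕ) : Ideal (MvPolynomial (Fin 2) ℤ) where
  carrier := {q | ∀ d ∈ q.support, n ≤ d 0 + d 1}
  zero_mem' := by intro d hd; simp at hd
  add_mem' := by
    intro a b ha hb d hd
    rcases Finset.mem_union.mp (MvPolynomial.support_add hd) with h | h
    · exact ha d h
    · exact hb d h
  smul_mem' := by
    intro r q hq d hd
    rw [smul_eq_mul] at hd
    have := MvPolynomial.support_mul r q hd
    rw [Finset.mem_add] at this
    obtain ⟨y, _, z, hz, hyz⟩ := this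
    have h0 : d 0 = y 0 + z 0 := by rw [← hyz]; rfl
    have h1 : d 1 = y 1 + z 1 := by rw [← hyz]; rfl
    have := hq z hz
    omega

lemma mul_mem_Jlow {a b : ℕ} {q r : MvPolynomial (Fin 2) ℤ}
    (hq : q ∈ Jlow a) (hr : r ∈ Jlow b) : q * r ∈ Jlow (a + b) := by
  intro d hd
  have := MvPolynomial.support_mul q r hd
  rw [Finset.mem_add] at this
  obtain ⟨y, hy, z, hz, hyz⟩ := this
  have h0 : d 0 = y 0 + z 0 := by rw [← hyz]; rfl
  have h1 : d 1 = y 1 + z 1 := by rw [← hyz]; rfl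
  have := hq y hy
  have := hr z hz
  omega

lemma span_XY_le : Ideal.span {(X 0 : MvPolynomial (Fin 2) ℤ), X 1} ≤ Jlow 1 := by
  rw [Ideal.span_le]
  rintro p (rfl | rfl) <;>
  · intro d hd
    rw [MvPolynomial.support_X, Finset.mem_singleton] at hd
    subst hd
    simp [Finsupp.single_apply]

lemma span_XY_pow_le (n : ℕ) :
    (Ideal.span {(X 0 : MvPolynomial (Fin 2) ℤ), X 1}) ^ n ≤ Jlow n := by
  induction n with
  | zero => intro q _ d _; omega
  | succ n ih =>
    rw [pow_succ]
    apply Ideal.mul_le.mpr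
    intro r hr s hs
    exact mul_mem_Jlow (ih hr) (span_XY_le hs)

lemma Iid_pow_map (n : ℕ) :
    Iid l ^ n = Ideal.map (Ideal.Quotient.mk (IA l))
      ((Ideal.span {(X 0 : MvPolynomial (Fin 2) ℤ), X 1}) ^ n) := by
  rw [Ideal.map_pow, Ideal.map_span, Set.image_pair]
  rfl

lemma mon_mem_Iid_pow (i j n : ℕ) (h : n ≤ i + j) :
    xA l ^ i * yA l ^ j ∈ Iid l ^ n := by
  set i' := min i n with hi'
  set j' := n - i' with hj'
  have hii : i' ≤ i := min_le_left _ _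
  have hjj : j' ≤ j := by omega
  have hx : xA l ∈ Iid l := Ideal.subset_span (by left; rfl)
  have hy : yA l ∈ Iid l := Ideal.subset_span (by right; rfl)
  have hmem : xA l ^ i' * yA l ^ j' ∈ Iid l ^ n := by
    have : Iid l ^ n = Iid l ^ i' * Iid l ^ j' := by
      rw [← Ideal.IsTwoSided.pow_add]; congr 1; omega
    rw [this]
    exact Ideal.mul_mem_mul (Ideal.pow_mem_pow hx i') (Ideal.pow_mem_pow hy j')
  have heq : xA l ^ i * yA l ^ j =
      (xA l ^ i' * yA l ^ j') * (xA l ^ (i - i') * yA l ^ (j - j')) := by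
    rw [mul_mul_mul_comm, ← pow_add, ← pow_add]
    congr 2 <;> omega
  rw [heq]
  exact Ideal.mul_mem_right _ _ hmem

end charac
section memb
variable (l : ℕ) [NeZero l]

lemma single_one_mul_eq_mapDomain (g : ℕ × ZMod l) (f : Rng l) :
    AddMonoidAlgebra.single g (1 : ℤ) * f = AddMonoidAlgebra.mapDomain (fun p => g + p) f := by
  induction f using AddMonoidAlgebra.induction with
  | zero => simp [AddMonoidAlgebra.mapDomain_zero]
  | single_add a b f' _ _ ih =>
    rw [mul_add, AddMonoidAlgebra.mapDomain_add, ← ih]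
    congr 1
    show AddMonoidAlgebra.single g 1 * AddMonoidAlgebra.single a b = _
    rw [AddMonoidAlgebra.single_mul_single, one_mul, AddMonoidAlgebra.mapDomain_single]

lemma mem_xnBadd_iff (n : ℕ) (b : Bq l) :
    b ∈ xnBadd l n ↔ ∀ p ∈ (Φhom l b).coeff.support, n ≤ p.1 := by
  constructor
  · rintro ⟨c, rfl⟩
    show ∀ p ∈ (Φhom l (xB l ^ n * c)).coeff.support, n ≤ p.1
    intro p hp
    rw [map_mul, map_pow, Φhom_xB, AddMonoidAlgebra.single_pow, one_pow,
      single_one_mul_eq_mapDomain] at hp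
    have := Finsupp.mapDomain_support hp
    rw [Finset.mem_image] at this
    obtain ⟨d, _, hd⟩ := this
    have h1 : p.1 = (n • ((1 : ℕ), (0 : ZMod l))).1 + d.1 := by rw [← hd]; rfl
    rw [Prod.smul_mk] at h1
    simp only [smul_eq_mul, mul_one] at h1
    omega
  · intro h
    set f := Φhom l b with hf
    set g : Rng l := AddMonoidAlgebra.mapDomain (fun p : ℕ × ZMod l => (p.1 - n, p.2)) f with hg
    have key : AddMonoidAlgebra.single ((n : ℕ), (0 : ZMod l)) (1 : ℤ) * g = f := by
      rw [single_one_mul_eq_mapDomain, hg]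
      apply AddMonoidAlgebra.coeff_injective
      show Finsupp.mapDomain _ (Finsupp.mapDomain _ f.coeff) = f.coeff
      rw [← Finsupp.mapDomain_comp]
      have : Finsupp.mapDomain
          ((fun p : ℕ × ZMod l => ((n : ℕ), (0 : ZMod l)) + p) ∘ fun p => (p.1 - n, p.2)) f.coeff =
          Finsupp.mapDomain id f.coeff := by
        apply Finsupp.mapDomain_congr
        intro x hx
        have hx1 := h x hx
        simp only [Function.comp_apply, Prod.mk_add_mk, id_eq, zero_add]
        have hn : n + (x.1 - n) = x.1 := by omega
        rw [hn]
      rw [this, Finsupp.mapDomain_id]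
    refine ⟨Ψhom l g, ?_⟩
    show xB l ^ n * Ψhom l g = b
    have h2 : xB l ^ n = Ψhom l (AddMonoidAlgebra.single ((n : ℕ), (0 : ZMod l)) (1 : ℤ)) := by
      rw [Ψhom_single, one_smul, ZMod.val_zero, pow_zero, mul_one]
    rw [h2, ← map_mul, key, hf]
    exact Ψhom_Φhom l b

lemma mem_ΔInadd_iff (n : ℕ) (b : Bq l) :
    b ∈ ΔInadd l n ↔ ∀ p ∈ (Φhom l b).coeff.support, n ≤ p.1 ∧ p.2.val ≤ p.1 := by
  constructor
  · rintro ⟨a, ha, rfl⟩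
    show ∀ p ∈ (Φhom l (Δmap l a)).coeff.support, _
    rw [Iid_pow_map] at ha
    obtain ⟨q, hq, rfl⟩ := (Ideal.mem_map_iff_of_surjective _ Ideal.Quotient.mk_surjective).mp ha
    intro p hp
    rw [Φ_Δ_mk] at hp
    obtain ⟨d, hd, rfl⟩ := supp_F l q p hp
    have hdeg : n ≤ d 0 + d 1 := span_XY_pow_le n hq d hd
    refine ⟨hdeg, ?_⟩
    show ((d 1 : ZMod l)).val ≤ d 0 + d 1
    rw [ZMod.val_natCast]
    have := Nat.mod_le (d 1) l
    omega
  · intro h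
    rw [← Ψhom_Φhom l b]
    set f := Φhom l b with hf
    clear_value f
    clear hf b
    induction f using AddMonoidAlgebra.induction with
    | zero => simpa using (ΔInadd l n).zero_mem
    | single_add a c f' ha' hc ih =>
      have hmem : ∀ p, p = a ∨ p ∈ f'.coeff.support →
          p ∈ (AddMonoidAlgebra.single a c + f').coeff.support := by
        intro p hp
        rw [Finsupp.mem_support_iff]
        have happ : (AddMonoidAlgebra.single a c + f').coeff p =
            Finsupp.single a c p + f'.coeff p := rfl
        rw [happ, Finsupp.single_apply]
        rcases hp with rfl | hp
        · have h0 : f'.coeff p = 0 := Finsupp.notMem_support_iff.mp ha'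
          simp [h0, hc]
        · have hpa : a ≠ p := by rintro rfl; exact ha' hp
          simp [hpa, Finsupp.mem_support_iff.mp hp]
      rw [map_add]
      apply (ΔInadd l n).add_mem
      · obtain ⟨hc1, hc2⟩ := h a (hmem a (Or.inl rfl))
        have hsum : a.1 - a.2.val + a.2.val = a.1 := by omega
        show Ψhom l (AddMonoidAlgebra.single a c) ∈ ΔInadd l n
        rw [Ψhom_single]
        apply AddSubgroup.zsmul_mem
        have key : xB l ^ a.1 * tB l ^ a.2.val =
            Δmap l (xA l ^ (a.1 - a.2.val) * yA l ^ a.2.val) := by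
          rw [map_mul, map_pow, map_pow, Δmap_xA, Δmap_yA, mul_pow]
          rw [show xB l ^ (a.1 - a.2.val) * (tB l ^ a.2.val * xB l ^ a.2.val) =
            (xB l ^ (a.1 - a.2.val) * xB l ^ a.2.val) * tB l ^ a.2.val from by ring,
            ← pow_add, hsum]
        rw [key]
        exact ⟨_, mon_mem_Iid_pow l _ _ n (by omega), rfl⟩
      · exact ih (fun p hp => h p (hmem p (Or.inr hp)))

lemma range_eq_ΔInadd_zero : (Δmap l).toAddMonoidHom.range = ΔInadd l 0 := by
  rw [ΔInadd, Submodule.pow_zero, Ideal.one_eq_top, Submodule.top_toAddSubgroup,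
    AddMonoidHom.range_eq_map]

end memb
section final
variable (l : ℕ) [NeZero l]

def Sfin (n : ℕ) : Finset (ℕ × ZMod l) :=
  (Finset.range l ×ˢ Finset.univ).filter fun p => n ≤ p.1 ∧ p.1 < p.2.val

lemma mem_Sfin (n : ℕ) (p : ℕ × ZMod l) :
    p ∈ Sfin l n ↔ n ≤ p.1 ∧ p.1 < p.2.val := by
  unfold Sfin
  rw [Finset.mem_filter]
  constructor
  · exact fun h => h.2
  · intro h
    exact ⟨Finset.mem_product.mpr ⟨Finset.mem_range.mpr
      (lt_trans h.2 (ZMod.val_lt p.2)), Finset.mem_univ _⟩, h⟩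

lemma card_Sfin (n : ℕ) : (Sfin l n).card = (l - n) * (l - n - 1) / 2 := by
  classical
  have hS : Sfin l n = (Finset.univ : Finset (ZMod l)).biUnion
      fun j => (Finset.Ico n j.val).image fun m => (m, j) := by
    ext p
    rw [mem_Sfin, Finset.mem_biUnion]
    constructor
    · rintro ⟨h1, h2⟩
      exact ⟨p.2, Finset.mem_univ _, Finset.mem_image.mpr
        ⟨p.1, Finset.mem_Ico.mpr ⟨h1, h2⟩, rfl⟩⟩
    · rintro ⟨j, -, hj⟩
      obtain ⟨m, hm, rfl⟩ := Finset.mem_image.mp hj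
      rw [Finset.mem_Ico] at hm
      exact hm
  rw [hS, Finset.card_biUnion]
  · have hcard : ∀ j : ZMod l, ((Finset.Ico n j.val).image fun m => (m, j)).card
        = j.val - n := by
      intro j
      rw [Finset.card_image_of_injective _ (fun a b hab => (Prod.mk.injEq _ _ _ _).mp hab |>.1),
        Nat.card_Ico]
    simp only [hcard]
    have hsum : ∑ j : ZMod l, (j.val - n) = ∑ v ∈ Finset.range l, (v - n) := by
      refine Finset.sum_nbij' (fun j => j.val) (fun v => (v : ZMod l)) ?_ ?_ ?_ ?_ ?_
      · intro a _; exact Finset.mem_range.mpr (ZMod.val_lt a)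
      · intro a _; exact Finset.mem_univ _
      · intro a _
        show ((a.val : ℕ) : ZMod l) = a
        rw [ZMod.natCast_val, ZMod.cast_id]
      · intro a ha
        show ((a : ZMod l)).val = a
        rw [ZMod.val_natCast, Nat.mod_eq_of_lt (Finset.mem_range.mp ha)]
      · intro a _; rfl
    rw [hsum]
    have h2 : ∑ v ∈ Finset.range l, (v - n) = ∑ v ∈ Finset.Ico n l, (v - n) := by
      rw [Finset.range_eq_Ico]
      apply (Finset.sum_subset (Finset.Ico_subset_Ico (Nat.zero_le n) le_rfl) _).symm
      intro x hx hx2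
      rw [Finset.mem_Ico] at hx hx2
      omega
    rw [h2, Finset.sum_Ico_eq_sum_range]
    simp only [Nat.add_sub_cancel_left]
    rw [Finset.sum_range_id]
  · intro i _ j _ hij
    rw [Function.onFun, Finset.disjoint_left]
    rintro p hp1 hp2
    obtain ⟨m1, _, h1⟩ := Finset.mem_image.mp hp1
    obtain ⟨m2, _, h2⟩ := Finset.mem_image.mp hp2
    apply hij
    rw [← h1] at h2
    exact (((Prod.mk.injEq _ _ _ _).mp h2).2).symm

/-- coefficient-extraction hom -/
def coeffHom (n : ℕ) : Bq l →+ ({x : ℕ × ZMod l // x ∈ Sfin l n} → ℤ) where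
  toFun b := fun s => (Φhom l b).coeff s.val
  map_zero' := by
    funext s
    show (Φhom l 0).coeff s.val = 0
    rw [map_zero]
    rfl
  map_add' a b := by
    funext s
    show (Φhom l (a + b)).coeff s.val = _
    rw [map_add]
    rfl

lemma exists_preimage (n : ℕ) (v : {x : ℕ × ZMod l // x ∈ Sfin l n} → ℤ) :
    ∃ b : Bq l, (∀ p ∈ (Φhom l b).coeff.support, n ≤ p.1) ∧
      ∀ s : {x : ℕ × ZMod l // x ∈ Sfin l n}, (Φhom l b).coeff s.val = v s := by
  classical
  set f : Rng l := ∑ s : {x : ℕ × ZMod l // x ∈ Sfin l n},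
    AddMonoidAlgebra.single s.val (v s) with hf
  refine ⟨Ψhom l f, ?_, ?_⟩
  · intro p hp
    rw [Φhom_Ψhom, AddMonoidAlgebra.coeff_sum] at hp
    have := Finsupp.support_finset_sum (s := Finset.univ)
      (f := fun s : {x : ℕ × ZMod l // x ∈ Sfin l n} =>
        (AddMonoidAlgebra.single s.val (v s) : Rng l).coeff) hp
    rw [Finset.mem_biUnion] at this
    obtain ⟨s, _, hs⟩ := this
    have := Finsupp.support_single_subset hs
    rw [Finset.mem_singleton] at this
    subst this
    exact ((mem_Sfin l n s.val).mp s.property).1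
  · intro s
    rw [Φhom_Ψhom]
    have happ : f.coeff s.val =
        ∑ s' : {x : ℕ × ZMod l // x ∈ Sfin l n},
          (AddMonoidAlgebra.single s'.val (v s')).coeff s.val := by
      rw [hf, AddMonoidAlgebra.coeff_sum]
      exact Finsupp.finset_sum_apply _ _ _
    rw [happ]
    have hterm : ∀ s' : {x : ℕ × ZMod l // x ∈ Sfin l n},
        (AddMonoidAlgebra.single s'.val (v s')).coeff s.val =
          if s' = s then v s' else 0 := by
      intro s'
      show Finsupp.single s'.val (v s') s.val = _
      rw [Finsupp.single_apply]
      congr 1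
      exact propext Subtype.ext_iff.symm
    simp only [hterm]
    rw [Finset.sum_ite_eq' Finset.univ s (fun s' => v s')]
    rw [if_pos (Finset.mem_univ s)]

end final
section assemble
variable (l : ℕ) [NeZero l]

def finEquiv (n : ℕ) : ({x : ℕ × ZMod l // x ∈ Sfin l n} → ℤ) ≃+
    (Fin ((l - n) * (l - n - 1) / 2) → ℤ) :=
  let e : {x : ℕ × ZMod l // x ∈ Sfin l n} ≃ Fin ((l - n) * (l - n - 1) / 2) :=
    Fintype.equivFinOfCardEq (by rw [Fintype.card_coe, card_Sfin])
  { Equiv.piCongrLeft' (fun _ => ℤ) e with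
    map_add' := fun a b => rfl }

lemma quot_equiv (n : ℕ) :
    Nonempty ((xnBadd l n ⧸ (ΔInadd l n).addSubgroupOf (xnBadd l n)) ≃+
      (Fin ((l - n) * (l - n - 1) / 2) → ℤ)) := by
  set ψ : xnBadd l n →+ ({x : ℕ × ZMod l // x ∈ Sfin l n} → ℤ) :=
    (coeffHom l n).comp (xnBadd l n).subtype with hψ
  have hker : ψ.ker = (ΔInadd l n).addSubgroupOf (xnBadd l n) := by
    ext x
    rw [AddMonoidHom.mem_ker, AddSubgroup.mem_addSubgroupOf]
    have hx : x.val ∈ xnBadd l n := x.property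
    rw [mem_xnBadd_iff] at hx
    rw [mem_ΔInadd_iff]
    constructor
    · intro h0 p hp
      refine ⟨hx p hp, ?_⟩
      by_contra hlt
      push_neg at hlt
      have hpS : p ∈ Sfin l n := (mem_Sfin l n p).mpr ⟨hx p hp, hlt⟩
      have hval := congrFun h0 (⟨p, hpS⟩ : {x : ℕ × ZMod l // x ∈ Sfin l n})
      rw [Finsupp.mem_support_iff] at hp
      exact hp hval
    · intro h
      funext s
      show (Φhom l x.val).coeff s.val = 0
      by_contra h0
      have hsupp : s.val ∈ (Φhom l x.val).coeff.support := Finsupp.mem_support_iff.mpr h0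
      have h2 := (h s.val hsupp).2
      have hlt := ((mem_Sfin l n s.val).mp s.property).2
      omega
  have hsurj : Function.Surjective ψ := by
    intro v
    obtain ⟨b, hb1, hb2⟩ := exists_preimage l n v
    have hbmem : b ∈ xnBadd l n := (mem_xnBadd_iff l n b).mpr hb1
    exact ⟨⟨b, hbmem⟩, funext fun s => hb2 s⟩
  rw [← hker]
  exact ⟨(QuotientAddGroup.quotientKerEquivOfSurjective ψ hsurj).trans (finEquiv l n)⟩

lemma coker_equiv :
    Nonempty ((Bq l ⧸ (Δmap l).toAddMonoidHom.range) ≃+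
      (Fin ((l - 0) * (l - 0 - 1) / 2) → ℤ)) := by
  have hker0 : (coeffHom l 0).ker = (Δmap l).toAddMonoidHom.range := by
    ext b
    rw [AddMonoidHom.mem_ker, range_eq_ΔInadd_zero, mem_ΔInadd_iff]
    constructor
    · intro h0 p hp
      refine ⟨Nat.zero_le _, ?_⟩
      by_contra hlt
      push_neg at hlt
      have hpS : p ∈ Sfin l 0 := (mem_Sfin l 0 p).mpr ⟨Nat.zero_le _, hlt⟩
      have hval := congrFun h0 (⟨p, hpS⟩ : {x : ℕ × ZMod l // x ∈ Sfin l 0})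
      rw [Finsupp.mem_support_iff] at hp
      exact hp hval
    · intro h
      funext s
      show (Φhom l b).coeff s.val = 0
      by_contra h0
      have hsupp : s.val ∈ (Φhom l b).coeff.support := Finsupp.mem_support_iff.mpr h0
      have h2 := (h s.val hsupp).2
      have hlt := ((mem_Sfin l 0 s.val).mp s.property).2
      omega
  have hsurj : Function.Surjective (coeffHom l 0) := by
    intro v
    obtain ⟨b, -, hb2⟩ := exists_preimage l 0 v
    exact ⟨b, funext hb2⟩
  rw [← hker0]
  exact ⟨(QuotientAddGroup.quotientKerEquivOfSurjective _ hsurj).trans (finEquiv l 0)⟩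

end assemble


/-- For `0 ≤ n ≤ l−1`, the quotient `(x^n·B)/Δ(I^n)` is, as an abelian group, free of rank
`(l−n)(l−n−1)/2`.  In particular (`n = 0`) the cokernel of `Δ : A → B` is a free abelian
group of rank `l(l−1)/2`. -/
theorem stmt_3 (l : ℕ) (hl : 1 ≤ l) :
    (∀ n : ℕ, n ≤ l - 1 →
      Nonempty ((xnBadd l n ⧸ (ΔInadd l n).addSubgroupOf (xnBadd l n)) ≃+
        (Fin ((l - n) * (l - n - 1) / 2) → ℤ))) ∧
    Nonempty ((Bq l ⧸ (Δmap l).toAddMonoidHom.range) ≃+ (Fin (l * (l - 1) / 2) → ℤ)) := by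
  haveI : NeZero l := ⟨by omega⟩
  refine ⟨fun n _ => quot_equiv l n, ?_⟩
  exact coker_equiv l
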